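/- (Key Lemma for general sets) Let h : ℝⁿ → ℝⁿ be a bi-Lipschitz bijection with h(0) = 0, and let A, B ⊆ ℝⁿ with 0 ∈ closure(A \ {0}) ∩ closure(B \ {0}). Suppose there exist d > 1 and C > 0 such that A ⊆ ST_d(B;C) in a neighbourhood of 0. Then D(h(A)) ⊆ D(h(B)). -/

import Mathlib

open Filter Metric Topology MeasureTheory

noncomputable section

abbrev E (n : ℕ) := EuclideanSpace ℝ (Fin n)

/-- Direction set of `A` at the origin. -/
def Dir (n : ℕ) (A : Set (E n)) : Set (E n) :=
  {a | ‖a‖ = 1 ∧ ∃ x : ℕ → E n, (∀ i, x i ∈ A \ {0}) ∧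
    Tendsto x atTop (nhds (0 : E n)) ∧
    Tendsto (fun i => (‖x i‖)⁻¹ • x i) atTop (nhds a)}

/-- Sea-tangle neighbourhood of degree `d` and width `C`. -/
def STg (n : ℕ) (d C : ℝ) (A : Set (E n)) : Set (E n) :=
  {x | Metric.infDist x A ≤ C * ‖x‖ ^ d}

/-- Cone over the direction set (real tangent cone). -/
def LD (n : ℕ) (A : Set (E n)) : Set (E n) :=
  {x | ∃ a ∈ Dir n A, ∃ t : ℝ, 0 ≤ t ∧ x = t • a}

/-- Sequence selection property. -/
def SSP (n : ℕ) (S : Set (E n)) : Prop :=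
  ∀ a : ℕ → E n, (∀ m, a m ≠ 0) → Tendsto a atTop (nhds (0 : E n)) →
    (∃ L ∈ Dir n S, Tendsto (fun m => (‖a m‖)⁻¹ • a m) atTop (nhds L)) →
    ∀ ε > (0:ℝ), ∃ b : ℕ → E n, (∀ m, b m ∈ S) ∧
      ∀ᶠ m in atTop, ‖a m - b m‖ ≤ ε * min ‖a m‖ ‖b m‖

/-- ST-equivalence of set-germs at the origin. -/
def STEquiv (n : ℕ) (A B : Set (E n)) : Prop :=
  ∃ d₁ > (1:ℝ), ∃ C₁ > (0:ℝ), ∃ d₂ > (1:ℝ), ∃ C₂ > (0:ℝ), ∃ ε > (0:ℝ),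
    B ∩ ball (0 : E n) ε ⊆ STg n d₁ C₁ A ∧ A ∩ ball (0 : E n) ε ⊆ STg n d₂ C₂ B

private lemma rpow_split (t d : ℝ) (ht : 0 < t) : t ^ d = t ^ (d - 1) * t := by
  have h := Real.rpow_add ht (d - 1) 1
  rw [Real.rpow_one] at h
  rw [show d - 1 + 1 = d by ring] at h
  exact h

private lemma aux_dir {n : ℕ} (u v : ℕ → E n) (a : E n)
    (hu : ∀ i, u i ≠ 0) (hv : ∀ i, v i ≠ 0)
    (hdir : Tendsto (fun i => (‖u i‖)⁻¹ • u i) atTop (nhds a))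
    (hrat : Tendsto (fun i => ‖u i - v i‖ / ‖u i‖) atTop (nhds 0)) :
    Tendsto (fun i => (‖v i‖)⁻¹ • v i) atTop (nhds a) := by
  have hupos : ∀ i, (0:ℝ) < ‖u i‖ := fun i => norm_pos_iff.mpr (hu i)
  have hvpos : ∀ i, (0:ℝ) < ‖v i‖ := fun i => norm_pos_iff.mpr (hv i)
  set r : ℕ → ℝ := fun i => ‖v i‖ / ‖u i‖ with hrdef
  have hr1 : Tendsto (fun i => r i - 1) atTop (nhds 0) := by
    refine squeeze_zero_norm (a := fun i => ‖u i - v i‖ / ‖u i‖) (fun i => ?_) hrat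
    have heq : r i - 1 = (‖v i‖ - ‖u i‖) / ‖u i‖ := by
      rw [hrdef]
      rw [sub_div, div_self (ne_of_gt (hupos i))]
    rw [heq, Real.norm_eq_abs, abs_div, abs_of_pos (hupos i)]
    have hb : |‖v i‖ - ‖u i‖| ≤ ‖u i - v i‖ := by
      rw [norm_sub_rev]
      exact abs_norm_sub_norm_le (v i) (u i)
    exact div_le_div₀ (norm_nonneg _) hb (hupos i) le_rfl
  have hr : Tendsto r atTop (nhds 1) := by
    have := hr1.add (tendsto_const_nhds (x := (1:ℝ)))
    simpa using this
  have h2 : Tendsto (fun i => (‖u i‖)⁻¹ • (u i - v i)) atTop (nhds (0 : E n)) := by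
    rw [tendsto_zero_iff_norm_tendsto_zero]
    have heq : (fun i => ‖(‖u i‖)⁻¹ • (u i - v i)‖) = fun i => ‖u i - v i‖ / ‖u i‖ := by
      funext i
      rw [norm_smul, Real.norm_eq_abs, abs_inv, abs_of_pos (hupos i), inv_mul_eq_div]
    rw [heq]
    exact hrat
  have hw : Tendsto (fun i => (‖u i‖)⁻¹ • v i) atTop (nhds a) := by
    have h3 := hdir.sub h2
    rw [sub_zero] at h3
    have heq : (fun i => (‖u i‖)⁻¹ • v i)
        = fun i => (‖u i‖)⁻¹ • u i - (‖u i‖)⁻¹ • (u i - v i) := by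
      funext i
      rw [← smul_sub, sub_sub_cancel]
    rw [heq]
    exact h3
  have hrinv : Tendsto (fun i => (r i)⁻¹) atTop (nhds 1) := by
    simpa using hr.inv₀ one_ne_zero
  have hfinal := hrinv.smul hw
  rw [one_smul] at hfinal
  have heq2 : (fun i => (r i)⁻¹ • ((‖u i‖)⁻¹ • v i)) = fun i => (‖v i‖)⁻¹ • v i := by
    funext i
    rw [smul_smul]
    congr 1
    rw [hrdef]
    field_simp
    rw [mul_comm (‖v i‖) (‖u i‖), div_mul_eq_div_div, div_self (ne_of_gt (hupos i))]
  rw [heq2] at hfinal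
  exact hfinal

theorem stmt5 (n : ℕ) (h : E n → E n) (hbij : Function.Bijective h) (hh0 : h 0 = 0)
    (K₁ K₂ : ℝ) (hK₁ : 0 < K₁) (hK : K₁ ≤ K₂)
    (hlip : ∀ x y : E n, K₁ * ‖x - y‖ ≤ ‖h x - h y‖ ∧ ‖h x - h y‖ ≤ K₂ * ‖x - y‖)
    (A B : Set (E n)) (hA : (0 : E n) ∈ closure (A \ {0}))
    (hB : (0 : E n) ∈ closure (B \ {0}))
    (d C ε : ℝ) (hd : 1 < d) (hC : 0 < C) (hε : 0 < ε)
    (hsub : A ∩ ball (0 : E n) ε ⊆ STg n d C B) :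
    Dir n (h '' A) ⊆ Dir n (h '' B) := by
  intro a ha
  obtain ⟨hanorm, y, hy, hy0, hydir⟩ := ha
  have hK₂ : (0:ℝ) < K₂ := lt_of_lt_of_le hK₁ hK
  have hmem : ∀ i, ∃ xi, xi ∈ A ∧ h xi = y i := fun i => (hy i).1
  choose x hxA hxy using hmem
  have hyne : ∀ i, y i ≠ 0 := fun i h0 => (hy i).2 h0
  have hxne : ∀ i, x i ≠ 0 := by
    intro i h0
    exact hyne i (by rw [← hxy i, h0, hh0])
  have hxnorm : ∀ i, ‖x i‖ ≤ ‖y i‖ / K₁ := by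
    intro i
    have h1 := (hlip (x i) 0).1
    rw [hh0, sub_zero, sub_zero, hxy i] at h1
    rw [le_div_iff₀ hK₁]
    linarith
  have hynorm0 : Tendsto (fun i => ‖y i‖) atTop (nhds (0:ℝ)) := by
    simpa [Function.comp_def] using (continuous_norm.tendsto (0 : E n)).comp hy0
  have hxnorm0 : Tendsto (fun i => ‖x i‖) atTop (nhds (0:ℝ)) :=
    squeeze_zero (fun i => norm_nonneg _) hxnorm (by simpa using hynorm0.div_const K₁)
  have hBne : B.Nonempty := by
    have h1 := closure_nonempty_iff.mp ⟨0, hB⟩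
    exact h1.mono Set.diff_subset
  have hbex : ∀ i, ∃ bi ∈ B, dist (x i) bi < infDist (x i) B + ‖x i‖ ^ d := by
    intro i
    apply (infDist_lt_iff hBne).mp
    have hp : (0:ℝ) < ‖x i‖ ^ d := Real.rpow_pos_of_pos (norm_pos_iff.mpr (hxne i)) d
    linarith
  choose b hbB hbd using hbex
  set c : ℝ := C + 1 with hcdef
  have hcpos : (0:ℝ) < c := by rw [hcdef]; linarith
  have hd1pos : (0:ℝ) < d - 1 := by linarith
  have hrp : Tendsto (fun i => ‖x i‖ ^ (d - 1)) atTop (nhds (0:ℝ)) := by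
    have hcont : ContinuousAt (fun s : ℝ => s ^ (d - 1)) 0 :=
      Real.continuousAt_rpow_const 0 (d - 1) (Or.inr (le_of_lt hd1pos))
    have h1 := hcont.tendsto.comp hxnorm0
    simpa [Function.comp_def, Real.zero_rpow (ne_of_gt hd1pos)] using h1
  have h1 : ∀ᶠ i in atTop, ‖x i‖ < ε := hxnorm0.eventually_lt_const hε
  have h2 : ∀ᶠ i in atTop, c * ‖x i‖ ^ (d - 1) < 1 / 2 := by
    have hm := hrp.const_mul c
    rw [mul_zero] at hm
    exact hm.eventually_lt_const (by norm_num)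
  obtain ⟨N, hN⟩ := eventually_atTop.mp (h1.and h2)
  have key : ∀ m, N ≤ m →
      dist (x m) (b m) ≤ (1 / 2) * ‖x m‖ ∧ dist (x m) (b m) ≤ c * ‖x m‖ ^ d := by
    intro m hm
    obtain ⟨hmε, hm2⟩ := hN m hm
    have hxpos : (0:ℝ) < ‖x m‖ := norm_pos_iff.mpr (hxne m)
    have hinf : infDist (x m) B ≤ C * ‖x m‖ ^ d :=
      hsub ⟨hxA m, mem_ball_zero_iff.mpr hmε⟩
    have hdb : dist (x m) (b m) ≤ c * ‖x m‖ ^ d := by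
      have heq : c * ‖x m‖ ^ d = C * ‖x m‖ ^ d + ‖x m‖ ^ d := by rw [hcdef]; ring
      have := hbd m
      linarith
    refine ⟨?_, hdb⟩
    have hsplit := rpow_split ‖x m‖ d hxpos
    calc dist (x m) (b m) ≤ c * ‖x m‖ ^ d := hdb
      _ = (c * ‖x m‖ ^ (d - 1)) * ‖x m‖ := by rw [hsplit]; ring
      _ ≤ (1 / 2) * ‖x m‖ := by
          apply mul_le_mul_of_nonneg_right (le_of_lt hm2) (le_of_lt hxpos)
  have hblow : ∀ m, N ≤ m → ‖x m‖ / 2 ≤ ‖b m‖ := by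
    intro m hm
    have hk := (key m hm).1
    have ht := norm_sub_norm_le (x m) (b m)
    rw [← dist_eq_norm] at ht
    linarith
  have hbne : ∀ m, N ≤ m → b m ≠ 0 := by
    intro m hm h0
    have hl := hblow m hm
    rw [h0, norm_zero] at hl
    have hxpos : (0:ℝ) < ‖x m‖ := norm_pos_iff.mpr (hxne m)
    linarith
  have hbup : ∀ m, N ≤ m → ‖b m‖ ≤ 2 * ‖x m‖ := by
    intro m hm
    have hk := (key m hm).1
    have ht : ‖b m‖ - ‖x m‖ ≤ ‖b m - x m‖ := norm_sub_norm_le _ _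
    rw [norm_sub_rev, ← dist_eq_norm] at ht
    have hxnn := norm_nonneg (x m)
    linarith
  have hhbne : ∀ m, N ≤ m → h (b m) ≠ 0 := by
    intro m hm h0
    exact hbne m hm (hbij.1 (by rw [h0, hh0]))
  refine ⟨hanorm, fun i => h (b (i + N)), ?_, ?_, ?_⟩
  · intro i
    exact ⟨⟨b (i + N), hbB _, rfl⟩, hhbne (i + N) le_add_self⟩
  · rw [tendsto_zero_iff_norm_tendsto_zero]
    apply squeeze_zero (g := fun i => K₂ * (2 * ‖x (i + N)‖)) (fun i => norm_nonneg _)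
    · intro i
      have hl := (hlip (b (i + N)) 0).2
      rw [hh0, sub_zero, sub_zero] at hl
      have h2 := hbup (i + N) le_add_self
      nlinarith
    · have hx' : Tendsto (fun i => ‖x (i + N)‖) atTop (nhds (0:ℝ)) :=
        hxnorm0.comp (tendsto_add_atTop_nat N)
      have := ((hx'.const_mul 2).const_mul K₂)
      simpa using this
  · apply aux_dir (fun i => y (i + N)) _ a (fun i => hyne (i + N))
      (fun i => hhbne (i + N) le_add_self)
      (hydir.comp (tendsto_add_atTop_nat N))
    apply squeeze_zero (g := fun i => (K₂ * c / K₁) * ‖x (i + N)‖ ^ (d - 1))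
        (fun i => by positivity)
    · intro i
      have hm : N ≤ i + N := le_add_self
      have hxpos : (0:ℝ) < ‖x (i + N)‖ := norm_pos_iff.mpr (hxne (i + N))
      have hnum : ‖y (i + N) - h (b (i + N))‖ ≤ K₂ * (c * ‖x (i + N)‖ ^ d) := by
        rw [← hxy (i + N)]
        have hl := (hlip (x (i + N)) (b (i + N))).2
        have hdb := (key (i + N) hm).2
        rw [dist_eq_norm] at hdb
        nlinarith
      have hden : K₁ * ‖x (i + N)‖ ≤ ‖y (i + N)‖ := by
        have hl := (hlip (x (i + N)) 0).1
        rw [hh0, sub_zero, sub_zero, hxy (i + N)] at hl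
        exact hl
      have hsplit := rpow_split ‖x (i + N)‖ d hxpos
      calc ‖y (i + N) - h (b (i + N))‖ / ‖y (i + N)‖
          ≤ (K₂ * (c * ‖x (i + N)‖ ^ d)) / (K₁ * ‖x (i + N)‖) := by
            apply div_le_div₀ (by positivity) hnum (by positivity) hden
        _ = (K₂ * c / K₁) * ‖x (i + N)‖ ^ (d - 1) := by
            rw [hsplit]
            field_simp
    · have hx' : Tendsto (fun i => ‖x (i + N)‖ ^ (d - 1)) atTop (nhds (0:ℝ)) :=
        hrp.comp (tendsto_add_atTop_nat N)
      have := hx'.const_mul (K₂ * c / K₁)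
      simpa using this
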